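/- Let α ∈ (0,1), α ≠ 1/2, β = 1−α, and let J be an open interval with inf J = −∞ or sup J = +∞. If F, G : J → ℝ are differentiable and satisfy [F(b)−F(a)]G'(αa+βb) = [G(b)−G(a)]F'(αa+βb) for all a, b ∈ J, then there exist constants c₁, c₂, c₃ ∈ ℝ, not all zero, such that c₁F(x) + c₂G(x) + c₃ = 0 for all x ∈ J. -/

import Mathlib

lemma aux1 (J : Set ℝ) (α β : ℝ) (hα : α ∈ Set.Ioo (0:ℝ) 1) (hαhalf : α ≠ 1/2)
    (hβ : β = 1 - α) (F G : ℝ → ℝ)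
    (hF : ∀ x ∈ J, DifferentiableAt ℝ F x) (hG : ∀ x ∈ J, DifferentiableAt ℝ G x)
    (heq : ∀ a ∈ J, ∀ b ∈ J,
      (F b - F a) * deriv G (α * a + β * b) = (G b - G a) * deriv F (α * a + β * b))
    (m r : ℝ) (hr : 0 < r) (hI : Set.Ioo (m - r) (m + r) ⊆ J)
    (x : ℝ) (hx : x ∈ Set.Ioo (m - r) (m + r)) :
    deriv F x * deriv G m = deriv G x * deriv F m := by
  subst hβ
  obtain ⟨hα0, hα1⟩ := hα
  have hβ0 : 0 < 1 - α := by linarith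
  have hmJ : m ∈ J := hI ⟨by linarith, by linarith⟩
  set ρ : ℝ := if α < 1/2 then α / (1-α) else (1-α) / α with hρdef
  have hρ0 : 0 < ρ := by
    rw [hρdef]; split <;> positivity
  have hρ1 : ρ < 1 := by
    rw [hρdef]; split_ifs with hc
    · rw [div_lt_one hβ0]; linarith
    · have : 1/2 < α := lt_of_le_of_ne (not_lt.mp hc) (Ne.symm hαhalf)
      rw [div_lt_one hα0]; linarith
  set H : ℝ → ℝ := fun t => deriv G m * F t - deriv F m * G t with hHdef
  -- H is invariant under the map S t = m - ρ (t - m)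
  have key : ∀ t ∈ J, (m - ρ * (t - m)) ∈ J → H (m - ρ * (t - m)) = H t := by
    intro t ht hst
    by_cases hcase : α < 1/2
    · have hρ : ρ = α / (1-α) := by rw [hρdef, if_pos hcase]
      have hmean : α * t + (1-α) * (m - ρ * (t - m)) = m := by
        rw [hρ]; field_simp; ring
      have := heq t ht _ hst
      rw [hmean] at this
      simp only [hHdef]; nlinarith [this]
    · have hρ : ρ = (1-α) / α := by rw [hρdef, if_neg hcase]
      have hmean : α * (m - ρ * (t - m)) + (1-α) * t = m := by
        rw [hρ]; field_simp; ring
      have := heq _ hst t ht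
      rw [hmean] at this
      simp only [hHdef]; nlinarith [this]
  -- iterates
  have hconst : ∀ y ∈ Set.Ioo (m - r) (m + r), H y = H m := by
    intro y hy
    set u : ℕ → ℝ := fun n => m + (-ρ) ^ n * (y - m) with hu
    have humem : ∀ n, u n ∈ Set.Ioo (m - r) (m + r) := by
      intro n
      have h1 : |(-ρ) ^ n * (y - m)| ≤ |y - m| := by
        rw [abs_mul, abs_pow, abs_neg, abs_of_pos hρ0]
        calc ρ ^ n * |y - m| ≤ 1 * |y - m| := by
              apply mul_le_mul_of_nonneg_right (pow_le_one₀ hρ0.le hρ1.le) (abs_nonneg _)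
          _ = |y - m| := one_mul _
      have h2 : |y - m| < r := by
        rw [abs_lt]; constructor <;> [linarith [hy.1]; linarith [hy.2]]
      have := abs_lt.mp (lt_of_le_of_lt h1 h2)
      exact ⟨by simp only [hu]; linarith [this.1], by simp only [hu]; linarith [this.2]⟩
    have hHu : ∀ n, H (u n) = H y := by
      intro n
      induction n with
      | zero => simp [hu]
      | succ k ih =>
        have : u (k + 1) = m - ρ * (u k - m) := by
          simp only [hu]; ring
        rw [this, key (u k) (hI (humem k)) (by rw [← this]; exact hI (humem (k+1)))]
        exact ih
    have hlim : Filter.Tendsto u Filter.atTop (nhds m) := by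
      have h1 : Filter.Tendsto (fun n : ℕ => (-ρ) ^ n) Filter.atTop (nhds 0) := by
        apply tendsto_pow_atTop_nhds_zero_of_abs_lt_one
        rw [abs_neg, abs_of_pos hρ0]; exact hρ1
      have := (h1.mul_const (y - m)).const_add m
      simpa using this
    have hHcont : ContinuousAt H m := by
      apply ContinuousAt.sub
      · exact (continuousAt_const.mul (hF m hmJ).continuousAt)
      · exact (continuousAt_const.mul (hG m hmJ).continuousAt)
    have h2 : Filter.Tendsto (fun n => H (u n)) Filter.atTop (nhds (H m)) :=
      hHcont.tendsto.comp hlim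
    have h3 : Filter.Tendsto (fun n => H (u n)) Filter.atTop (nhds (H y)) := by
      simp only [hHu]; exact tendsto_const_nhds
    exact tendsto_nhds_unique h3 h2
  -- H is locally constant near x, so its derivative vanishes at x
  have hxJ : x ∈ J := hI hx
  have hev : H =ᶠ[nhds x] fun _ => H m := by
    filter_upwards [(isOpen_Ioo.mem_nhds hx)] with t ht using hconst t ht
  have hd0 : HasDerivAt H 0 x := by
    exact (hasDerivAt_const x (H m)).congr_of_eventuallyEq hev
  have hd1 : HasDerivAt H (deriv G m * deriv F x - deriv F m * deriv G x) x := by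
    exact ((hF x hxJ).hasDerivAt.const_mul _).sub ((hG x hxJ).hasDerivAt.const_mul _)
  have := hd1.unique hd0
  nlinarith [this]

lemma aux2le (J : Set ℝ) (hJo : IsOpen J) (hJc : J.OrdConnected)
    (hJinf : ¬ BddBelow J ∨ ¬ BddAbove J)
    (α β : ℝ) (hα : α ∈ Set.Ioo (0:ℝ) 1) (hαhalf : α ≠ 1/2) (hβ : β = 1 - α)
    (F G : ℝ → ℝ)
    (hF : ∀ x ∈ J, DifferentiableAt ℝ F x) (hG : ∀ x ∈ J, DifferentiableAt ℝ G x)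
    (heq : ∀ a ∈ J, ∀ b ∈ J,
      (F b - F a) * deriv G (α * a + β * b) = (G b - G a) * deriv F (α * a + β * b))
    (x y : ℝ) (hx : x ∈ J) (hy : y ∈ J) (hxy : x ≤ y) :
    deriv F x * deriv G y = deriv G x * deriv F y := by
  rcases hJinf with hB | hB
  · -- J is unbounded below : take the center at x
    obtain ⟨ε, hε0, hball⟩ : ∃ ε > 0, Set.Ioo (y - ε) (y + ε) ⊆ J := by
      have h := hJo.mem_nhds hy
      rw [Metric.mem_nhds_iff] at h
      obtain ⟨ε, hε0, hb⟩ := h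
      exact ⟨ε, hε0, by rwa [Real.ball_eq_Ioo] at hb⟩
    obtain ⟨z, hz, hzlt⟩ := not_bddBelow_iff.mp hB (2*x - y - ε)
    have hr : (0:ℝ) < y - x + ε := by linarith
    have hsub : Set.Ioo (x - (y - x + ε)) (x + (y - x + ε)) ⊆ J := by
      intro t ht
      obtain ⟨ht1, ht2⟩ := ht
      by_cases hty : y ≤ t
      · exact hball ⟨by linarith, by linarith⟩
      · exact hJc.out hz hy ⟨by linarith, by linarith⟩
    have := aux1 J α β hα hαhalf hβ F G hF hG heq x (y - x + ε) hr hsub y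
      ⟨by linarith, by linarith⟩
    linarith
  · -- J is unbounded above : take the center at y
    obtain ⟨ε, hε0, hball⟩ : ∃ ε > 0, Set.Ioo (x - ε) (x + ε) ⊆ J := by
      have h := hJo.mem_nhds hx
      rw [Metric.mem_nhds_iff] at h
      obtain ⟨ε, hε0, hb⟩ := h
      exact ⟨ε, hε0, by rwa [Real.ball_eq_Ioo] at hb⟩
    obtain ⟨z, hz, hzlt⟩ := not_bddAbove_iff.mp hB (2*y - x + ε)
    have hr : (0:ℝ) < y - x + ε := by linarith
    have hsub : Set.Ioo (y - (y - x + ε)) (y + (y - x + ε)) ⊆ J := by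
      intro t ht
      obtain ⟨ht1, ht2⟩ := ht
      by_cases htx : t ≤ x
      · exact hball ⟨by linarith, by linarith⟩
      · exact hJc.out hx hz ⟨by linarith, by linarith⟩
    exact aux1 J α β hα hαhalf hβ F G hF hG heq y (y - x + ε) hr hsub x
      ⟨by linarith, by linarith⟩

/-- Theorem 4.2 -/
theorem stmt_11 (J : Set ℝ) (hJo : IsOpen J) (hJc : J.OrdConnected) (hJne : J.Nonempty)
    (hJinf : ¬ BddBelow J ∨ ¬ BddAbove J)
    (α β : ℝ) (hα : α ∈ Set.Ioo (0:ℝ) 1) (hαhalf : α ≠ 1/2) (hβ : β = 1 - α)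
    (F G : ℝ → ℝ)
    (hF : ∀ x ∈ J, DifferentiableAt ℝ F x) (hG : ∀ x ∈ J, DifferentiableAt ℝ G x)
    (heq : ∀ a ∈ J, ∀ b ∈ J,
      (F b - F a) * deriv G (α * a + β * b) = (G b - G a) * deriv F (α * a + β * b)) :
    ∃ c₁ c₂ c₃ : ℝ, (c₁, c₂, c₃) ≠ (0, 0, 0) ∧
      ∀ x ∈ J, c₁ * F x + c₂ * G x + c₃ = 0 := by
  obtain ⟨x₀, hx₀⟩ := hJne
  have cross : ∀ x ∈ J, ∀ y ∈ J, deriv F x * deriv G y = deriv G x * deriv F y := by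
    intro x hx y hy
    rcases le_total x y with h | h
    · exact aux2le J hJo hJc hJinf α β hα hαhalf hβ F G hF hG heq x y hx hy h
    · have := aux2le J hJo hJc hJinf α β hα hαhalf hβ F G hF hG heq y x hy hx h
      linarith
  have hconv : Convex ℝ J := hJc.convex
  have hconst : ∀ K : ℝ → ℝ, (∀ x ∈ J, DifferentiableAt ℝ K x) →
      (∀ x ∈ J, deriv K x = 0) → ∀ x ∈ J, K x = K x₀ := by
    intro K hK hK0 x hx
    refine hconv.is_const_of_fderivWithin_eq_zero
      (fun t ht => (hK t ht).differentiableWithinAt) (fun t ht => ?_) hx hx₀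
    have h1 : HasDerivAt K 0 t := by
      have h := (hK t ht).hasDerivAt
      rwa [hK0 t ht] at h
    have h2 := (h1.hasFDerivAt.hasFDerivWithinAt (s := J)).fderivWithin
      (hJo.uniqueDiffWithinAt ht)
    rw [h2]
    ext
    simp
  by_cases hc : ∃ m ∈ J, deriv F m ≠ 0 ∨ deriv G m ≠ 0
  · obtain ⟨m, hm, hne⟩ := hc
    refine ⟨deriv G m, -(deriv F m), -(deriv G m * F x₀ - deriv F m * G x₀), ?_, ?_⟩
    · intro hco
      have h1 := congrArg Prod.fst hco
      have h2 := congrArg (fun p : ℝ × ℝ × ℝ => p.2.1) hco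
      simp at h1 h2
      rcases hne with h | h
      · exact h h2
      · exact h h1
    · intro x hx
      have hK : ∀ t ∈ J, DifferentiableAt ℝ (fun t => deriv G m * F t - deriv F m * G t) t :=
        fun t ht => ((hF t ht).const_mul _).sub ((hG t ht).const_mul _)
      have hK0 : ∀ t ∈ J, deriv (fun t => deriv G m * F t - deriv F m * G t) t = 0 := by
        intro t ht
        have hd : deriv (fun t => deriv G m * F t - deriv F m * G t) t =
            deriv G m * deriv F t - deriv F m * deriv G t := (((hF t ht).hasDerivAt.const_mul (deriv G m)).sub
          ((hG t ht).hasDerivAt.const_mul (deriv F m))).deriv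
        rw [hd]
        have := cross t ht m hm
        linarith
      have := hconst _ hK hK0 x hx
      linarith [this]
  · push_neg at hc
    refine ⟨1, 0, -(F x₀), ?_, ?_⟩
    · intro hco
      have h1 := congrArg Prod.fst hco
      simp at h1
    · intro x hx
      have := hconst F hF (fun t ht => (hc t ht).1) x hx
      rw [this]
      ring
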